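/- Fix k ≥ 0 and a finite family of pairs (Gᵢ, vᵢ), where each Gᵢ is a finite simple graph and vᵢ is a non-isolated vertex of Gᵢ. Then there exists a sequence of rooted trees (Tₙ, rₙ) of depth at most k such that: (1) for every i and every n, the number h(Tₙ, rₙ, Gᵢ, vᵢ) of homomorphisms from Tₙ to Gᵢ mapping rₙ to vᵢ is positive; and (2) whenever ℓ_k^{Gᵢ}(vᵢ) < ℓ_k^{Gⱼ}(vⱼ) in the recursive linear order on k-level WL labels, the ratio h(Tₙ, rₙ, Gᵢ, vᵢ) / h(Tₙ, rₙ, Gⱼ, vⱼ) tends to 0 as n → ∞. -/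

import Mathlib

/-- The type of `k`-level Weisfeiler–Leman labels. -/
def WLLabel : ℕ → Type
  | 0 => Unit
  | k + 1 => Multiset (WLLabel k)

/-- The `k`-level Weisfeiler–Leman label of a vertex. -/
def wlLabel {V : Type} [Fintype V] (G : SimpleGraph V) [DecidableRel G.Adj] :
    (k : ℕ) → V → WLLabel k
  | 0, _ => ()
  | k + 1, v => (G.neighborFinset v).val.map (wlLabel G k)

/-- The multiset of `k`-level WL labels of all vertices of `G`. -/
def wlMultiset {V : Type} [Fintype V] (G : SimpleGraph V) [DecidableRel G.Adj] (k : ℕ) :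
    Multiset (WLLabel k) :=
  (Finset.univ : Finset V).val.map (wlLabel G k)

instance wlLabelDecEq : (k : ℕ) → DecidableEq (WLLabel k)
  | 0 => inferInstanceAs (DecidableEq Unit)
  | k + 1 => letI := wlLabelDecEq k; inferInstanceAs (DecidableEq (Multiset (WLLabel k)))

/-- The recursive ("lexicographic") strict order on `k`-level WL labels: two multisets of
`k`-level labels are compared at the largest `k`-level label where their multiplicities
differ. -/
def wlLT : (k : ℕ) → WLLabel k → WLLabel k → Prop
  | 0, _, _ => False
  | k + 1, M, N => ∃ a : WLLabel k,
      Multiset.count a (M : Multiset (WLLabel k)) < Multiset.count a (N : Multiset (WLLabel k)) ∧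
      ∀ b : WLLabel k, wlLT k a b →
        Multiset.count b (M : Multiset (WLLabel k)) = Multiset.count b (N : Multiset (WLLabel k))

lemma wlLT_irrefl (k : ℕ) (a : WLLabel k) : ¬ wlLT k a a := by
  cases k with
  | zero => exact id
  | succ k => rintro ⟨x, hx, -⟩; exact lt_irrefl _ hx

lemma exists_wlLT_max (k : ℕ)
    (htr : ∀ a b c : WLLabel k, wlLT k a b → wlLT k b c → wlLT k a c)
    (htc : ∀ a b : WLLabel k, wlLT k a b ∨ a = b ∨ wlLT k b a)
    (s : Finset (WLLabel k)) (hs : s.Nonempty) :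
    ∃ m ∈ s, ∀ x ∈ s, x ≠ m → wlLT k x m := by
  induction hs using Finset.Nonempty.cons_induction with
  | singleton a => exact ⟨a, Finset.mem_singleton_self a, fun x hx hne => absurd (Finset.mem_singleton.1 hx) hne⟩
  | cons a s ha hs ih =>
    obtain ⟨m, hm, hmax⟩ := ih
    rcases htc a m with h | rfl | h
    · refine ⟨m, Finset.mem_cons_of_mem hm, ?_⟩
      intro x hx hne
      rcases Finset.mem_cons.1 hx with rfl | hx
      · exact h
      · exact hmax x hx hne
    · refine ⟨a, Finset.mem_cons_self _ _, ?_⟩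
      intro x hx hne
      rcases Finset.mem_cons.1 hx with rfl | hx
      · exact absurd rfl hne
      · exact hmax x hx hne
    · refine ⟨a, Finset.mem_cons_self _ _, ?_⟩
      intro x hx hne
      rcases Finset.mem_cons.1 hx with rfl | hx
      · exact absurd rfl hne
      · rcases htc x m with h' | rfl | h'
        · exact htr _ _ _ h' h
        · exact h
        · exact htr _ _ _ (hmax x hx (by rintro rfl; exact wlLT_irrefl _ _ h')) h

lemma wlLT_trans_trichotomy (k : ℕ) :
    (∀ a b c : WLLabel k, wlLT k a b → wlLT k b c → wlLT k a c) ∧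
    (∀ a b : WLLabel k, wlLT k a b ∨ a = b ∨ wlLT k b a) := by
  induction k with
  | zero =>
    exact ⟨fun a b c h => h.elim, fun a b => Or.inr (Or.inl rfl)⟩
  | succ k ih =>
    obtain ⟨ihT, ihC⟩ := ih
    constructor
    · rintro M N P ⟨x, hx, hxe⟩ ⟨y, hy, hye⟩
      rcases ihC x y with hxy | rfl | hyx
      · exact ⟨y, by rw [hxe y hxy]; exact hy,
          fun b hb => (hxe b (ihT _ _ _ hxy hb)).trans (hye b hb)⟩
      · exact ⟨x, hx.trans hy, fun b hb => (hxe b hb).trans (hye b hb)⟩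
      · exact ⟨x, lt_of_lt_of_eq hx (hye x hyx),
          fun b hb => (hxe b hb).trans (hye b (ihT _ _ _ hyx hb))⟩
    · intro M N
      by_cases hMN : M = N
      · exact Or.inr (Or.inl hMN)
      · have hex : ∃ b : WLLabel k,
            Multiset.count b (M : Multiset (WLLabel k)) ≠ Multiset.count b (N : Multiset (WLLabel k)) := by
          by_contra h
          push_neg at h
          exact hMN (Multiset.ext.2 h)
        set D : Finset (WLLabel k) :=
          ((M : Multiset (WLLabel k)).toFinset ∪ (N : Multiset (WLLabel k)).toFinset).filter
            (fun b => Multiset.count b (M : Multiset (WLLabel k)) ≠ Multiset.count b (N : Multiset (WLLabel k))) with hD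
        have hDmem : ∀ b, b ∈ D ↔
            Multiset.count b (M : Multiset (WLLabel k)) ≠ Multiset.count b (N : Multiset (WLLabel k)) := by
          intro b
          rw [hD, Finset.mem_filter]
          constructor
          · exact fun h => h.2
          · intro h
            refine ⟨?_, h⟩
            rcases Nat.eq_zero_or_pos (Multiset.count b (M : Multiset (WLLabel k))) with h0 | h0
            · refine Finset.mem_union_right _ ?_
              exact Multiset.mem_toFinset.2 (Multiset.count_pos.1 (by omega))
            · refine Finset.mem_union_left _ ?_
              exact Multiset.mem_toFinset.2 (Multiset.count_pos.1 (by omega))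
        obtain ⟨b0, hb0⟩ := hex
        obtain ⟨m, hm, hmax⟩ := exists_wlLT_max k ihT ihC D ⟨b0, (hDmem b0).2 hb0⟩
        have hmne := (hDmem m).1 hm
        have hside : ∀ b : WLLabel k, wlLT k m b →
            Multiset.count b (M : Multiset (WLLabel k)) = Multiset.count b (N : Multiset (WLLabel k)) := by
          intro b hb
          by_contra hne
          have hbD : b ∈ D := (hDmem b).2 hne
          have hbm : b ≠ m := by rintro rfl; exact wlLT_irrefl _ _ hb
          exact wlLT_irrefl _ m (ihT _ _ _ hb (hmax b hbD hbm))
        rcases lt_or_gt_of_ne hmne with h | h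
        · exact Or.inl ⟨m, h, hside⟩
        · exact Or.inr (Or.inr ⟨m, h, fun b hb => (hside b hb).symm⟩)

section Broom

open SimpleGraph

/-- Good labels: those arising from non-isolated vertices. -/
def GoodL : (k : ℕ) → WLLabel k → Prop
  | 0, _ => True
  | k + 1, M => (show Multiset (WLLabel k) from M) ≠ 0 ∧ ∀ ℓ ∈ (show Multiset (WLLabel k) from M), GoodL k ℓ

/-- Vertex type of the "broom" tree with branching numbers `cs`. -/
def bV : List ℕ → Type
  | [] => Unit
  | c :: cs => Unit ⊕ Fin c × bV cs

instance bVFintype : (cs : List ℕ) → Fintype (bV cs)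
  | [] => inferInstanceAs (Fintype Unit)
  | c :: cs => letI := bVFintype cs; inferInstanceAs (Fintype (Unit ⊕ Fin c × bV cs))

instance bVDecEq : (cs : List ℕ) → DecidableEq (bV cs)
  | [] => inferInstanceAs (DecidableEq Unit)
  | c :: cs => letI := bVDecEq cs; inferInstanceAs (DecidableEq (Unit ⊕ Fin c × bV cs))

/-- Root of the broom tree. -/
def bR : (cs : List ℕ) → bV cs
  | [] => ()
  | _ :: _ => Sum.inl ()

/-- Adjacency of the broom tree. -/
def bAdj : (cs : List ℕ) → bV cs → bV cs → Prop
  | [], _, _ => False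
  | _ :: cs, x, y =>
    match x, y with
    | Sum.inl _, Sum.inl _ => False
    | Sum.inl _, Sum.inr (_, z) => z = bR cs
    | Sum.inr (_, z), Sum.inl _ => z = bR cs
    | Sum.inr (i, z), Sum.inr (j, w) => i = j ∧ bAdj cs z w

lemma bAdj_symm : ∀ (cs : List ℕ) (x y : bV cs), bAdj cs x y → bAdj cs y x
  | [], _, _, h => h.elim
  | _ :: cs, Sum.inl _, Sum.inl _, h => h.elim
  | _ :: cs, Sum.inl _, Sum.inr (_, z), h => h
  | _ :: cs, Sum.inr (_, z), Sum.inl _, h => h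
  | _ :: cs, Sum.inr (i, z), Sum.inr (j, w), h => ⟨h.1.symm, bAdj_symm cs z w h.2⟩

lemma bAdj_irrefl : ∀ (cs : List ℕ) (x : bV cs), ¬ bAdj cs x x
  | [], _, h => h
  | _ :: cs, Sum.inl _, h => h
  | _ :: cs, Sum.inr (i, z), h => bAdj_irrefl cs z h.2

/-- The broom tree as a simple graph. -/
def bT (cs : List ℕ) : SimpleGraph (bV cs) where
  Adj := bAdj cs
  symm := ⟨fun x y h => bAdj_symm cs x y h⟩
  loopless := ⟨fun x h => bAdj_irrefl cs x h⟩

instance bTDecAdj : (cs : List ℕ) → DecidableRel (bT cs).Adj := by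
  intro cs
  induction cs with
  | nil => exact fun x y => Decidable.isFalse id
  | cons c cs ih =>
    rintro (x | ⟨i, x⟩) (y | ⟨j, y⟩)
    · exact Decidable.isFalse id
    · exact inferInstanceAs (Decidable (y = bR cs))
    · exact inferInstanceAs (Decidable (x = bR cs))
    · exact @instDecidableAnd _ _ _ (ih x y)

/-- Inclusion of the `i`-th branch. -/
def bIncl (c : ℕ) (cs : List ℕ) (i : Fin c) : bT cs →g bT (c :: cs) where
  toFun := fun x => Sum.inr (i, x)
  map_rel' := fun h => ⟨rfl, h⟩

lemma bAdj_root_branch (c : ℕ) (cs : List ℕ) (i : Fin c) :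
    (bT (c :: cs)).Adj (bR (c :: cs)) (Sum.inr (i, bR cs)) := rfl

/-- A walk from the root to any vertex. -/
def walkFromRoot : (cs : List ℕ) → (x : bV cs) → (bT cs).Walk (bR cs) x
  | [], () => SimpleGraph.Walk.nil
  | _ :: _, Sum.inl () => SimpleGraph.Walk.nil
  | c :: cs, Sum.inr (i, x) =>
    SimpleGraph.Walk.cons (bAdj_root_branch c cs i) ((walkFromRoot cs x).map (bIncl c cs i))

lemma walkFromRoot_length : ∀ (cs : List ℕ) (x : bV cs), (walkFromRoot cs x).length ≤ cs.length
  | [], () => Nat.le_refl 0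
  | _ :: _, Sum.inl () => Nat.zero_le _
  | c :: cs, Sum.inr (i, x) => by
    show ((walkFromRoot cs x).map (bIncl c cs i)).length + 1 ≤ cs.length + 1
    rw [SimpleGraph.Walk.length_map]
    exact Nat.succ_le_succ (walkFromRoot_length cs x)

lemma bT_connected (cs : List ℕ) : (bT cs).Connected := by
  rw [SimpleGraph.connected_iff]
  refine ⟨fun x y => ?_, ⟨bR cs⟩⟩
  exact (walkFromRoot cs x).reachable.symm.trans (walkFromRoot cs y).reachable

/-- A graph with a grading such that each vertex has at most one lower neighbor is acyclic. -/
lemma acyclic_of_graded {V : Type} (G : SimpleGraph V) (d : V → ℕ)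
    (hgr : ∀ u w, G.Adj u w → d u = d w + 1 ∨ d w = d u + 1)
    (hun : ∀ u w w', G.Adj u w → G.Adj u w' → d w < d u → d w' < d u → w = w') :
    G.IsAcyclic := by
  classical
  intro v c hc
  obtain ⟨m, hm, hmax⟩ := Finset.exists_max_image c.support.toFinset d
    ⟨v, List.mem_toFinset.2 c.start_mem_support⟩
  rw [List.mem_toFinset] at hm
  set c' := c.rotate m hm with hc'def
  have hc' : c'.IsCycle := hc.rotate hm
  have hsup : ∀ x, x ∈ c'.support → d x ≤ d m := by
    intro x hx
    rcases (SimpleGraph.Walk.mem_support_iff c').1 hx with rfl | hx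
    · exact le_refl _
    · have : x ∈ c.support.tail := ((SimpleGraph.Walk.support_rotate c m hm).mem_iff).1 hx
      exact hmax x (List.mem_toFinset.2 (List.mem_of_mem_tail this))
  clear_value c'
  clear hc'def hc hm hmax
  -- decompose c' = cons h q
  cases c'' : c' with
  | nil => exact SimpleGraph.Walk.IsCycle.not_of_nil (c'' ▸ hc')
  | @cons _ w _ h q =>
    subst c''
    obtain ⟨x, q₂, h', hcq⟩ := SimpleGraph.Walk.exists_cons_eq_concat h q
    have hw : d w < d m := by
      have := hgr m w h
      have hle : d w ≤ d m := hsup w (by simp [SimpleGraph.Walk.support_cons,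
        SimpleGraph.Walk.start_mem_support])
      omega
    have hxsup : x ∈ (SimpleGraph.Walk.cons h q).support := by
      rw [hcq]
      rw [SimpleGraph.Walk.support_concat]
      simpa using Or.inl q₂.end_mem_support
    have hx : d x < d m := by
      have := hgr x m h'
      have hle : d x ≤ d m := hsup x hxsup
      omega
    have hwx : w = x := hun m w x h (G.adj_symm h') hw hx
    -- now derive a contradiction from edge-nodup
    have hnodup : (SimpleGraph.Walk.cons h q).edges.Nodup := hc'.edges_nodup
    have hlen : 3 ≤ (SimpleGraph.Walk.cons h q).length := hc'.three_le_length
    have hedges : (SimpleGraph.Walk.cons h q).edges = q₂.edges ++ [s(x, m)] := by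
      rw [hcq, SimpleGraph.Walk.edges_concat, List.concat_eq_append]
    cases hq2 : q₂.edges with
    | nil =>
      have : (SimpleGraph.Walk.cons h q).length = 1 := by
        have := SimpleGraph.Walk.length_edges (SimpleGraph.Walk.cons h q)
        rw [hedges, hq2] at this
        simpa using this.symm
      omega
    | cons e l =>
      have hcons : (SimpleGraph.Walk.cons h q).edges = s(m, w) :: q.edges :=
        SimpleGraph.Walk.edges_cons h q
      have he : e = s(m, w) := by
        rw [hedges, hq2] at hcons
        simpa using congrArg List.head? hcons
      have hmem : s(m, w) ∈ q₂.edges := by rw [hq2, he]; exact List.mem_cons_self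
      have hnot : s(x, m) ∉ q₂.edges := by
        rw [hedges] at hnodup
        have := (List.nodup_append.1 hnodup).2.2
        intro hmem'
        exact this _ hmem' _ (List.mem_singleton_self _) rfl
      have hxy : s(x, m) = s(m, w) := by rw [← hwx]; exact Sym2.eq_swap
      exact hnot (hxy ▸ hmem)

/-- Depth grading on the broom tree. -/
def bD : (cs : List ℕ) → bV cs → ℕ
  | [], _ => 0
  | _ :: _, Sum.inl _ => 0
  | _ :: cs, Sum.inr (_, x) => bD cs x + 1

lemma bD_root : ∀ cs : List ℕ, bD cs (bR cs) = 0
  | [] => rfl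
  | _ :: _ => rfl

lemma bD_graded : ∀ (cs : List ℕ) (u w : bV cs), (bT cs).Adj u w →
    bD cs u = bD cs w + 1 ∨ bD cs w = bD cs u + 1
  | [], _, _, h => h.elim
  | _ :: cs, Sum.inl _, Sum.inl _, h => h.elim
  | _ :: cs, Sum.inl _, Sum.inr (_, z), h => by
    right; show bD cs z + 1 = 0 + 1; rw [h, bD_root]
  | _ :: cs, Sum.inr (_, z), Sum.inl _, h => by
    left; show bD cs z + 1 = 0 + 1; rw [h, bD_root]
  | _ :: cs, Sum.inr (i, z), Sum.inr (j, w), h => by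
    have := bD_graded cs z w h.2
    show bD cs z + 1 = bD cs w + 1 + 1 ∨ bD cs w + 1 = bD cs z + 1 + 1
    omega

lemma bD_unique : ∀ (cs : List ℕ) (u w w' : bV cs), (bT cs).Adj u w → (bT cs).Adj u w' →
    bD cs w < bD cs u → bD cs w' < bD cs u → w = w'
  | [], _, _, _, h, _, _, _ => h.elim
  | _ :: cs, Sum.inl _, _, _, _, _, hw, _ => absurd hw (by simp [bD])
  | _ :: cs, Sum.inr (i, z), Sum.inl _, Sum.inl _, _, _, _, _ => rfl
  | _ :: cs, Sum.inr (i, z), Sum.inl _, Sum.inr (j, y), h1, h2, hw, hw' => by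
    exfalso
    have hz : z = bR cs := h1
    obtain ⟨rfl, hadj⟩ := h2
    have := bD_graded cs z y hadj
    have hz0 : bD cs z = 0 := by rw [hz, bD_root]
    have : bD cs y + 1 < bD cs z + 1 := hw'
    omega
  | _ :: cs, Sum.inr (i, z), Sum.inr (j, y), Sum.inl _, h1, h2, hw, hw' => by
    exfalso
    have hz : z = bR cs := h2
    obtain ⟨rfl, hadj⟩ := h1
    have hz0 : bD cs z = 0 := by rw [hz, bD_root]
    have : bD cs y + 1 < bD cs z + 1 := hw
    omega
  | _ :: cs, Sum.inr (i, z), Sum.inr (j, y), Sum.inr (j', y'), h1, h2, hw, hw' => by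
    obtain ⟨rfl, hadj⟩ := h1
    obtain ⟨rfl, hadj'⟩ := h2
    have : y = y' := bD_unique cs z y y' hadj hadj'
      (Nat.lt_of_succ_lt_succ hw) (Nat.lt_of_succ_lt_succ hw')
    rw [this]

lemma bT_isTree (cs : List ℕ) : (bT cs).IsTree :=
  ⟨bT_connected cs, acyclic_of_graded (bT cs) (bD cs) (bD_graded cs) (bD_unique cs)⟩

end Broom
section HomCount

open SimpleGraph

variable {V : Type} [Fintype V]

instance homFinite (cs : List ℕ) (G : SimpleGraph V) : Finite (bT cs →g G) := by
  have : Function.Injective (fun f : bT cs →g G => (f : bV cs → V)) := by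
    intro f g h
    exact DFunLike.coe_injective h
  exact Finite.of_injective _ this

/-- Number of homomorphisms from the broom tree sending the root to `v`. -/
noncomputable def hcount (G : SimpleGraph V) (cs : List ℕ) (v : V) : ℕ :=
  Nat.card {f : bT cs →g G // f (bR cs) = v}

lemma hcount_nil (G : SimpleGraph V) (v : V) : hcount G [] v = 1 := by
  have : Unique {f : bT [] →g G // f (bR []) = v} := by
    refine ⟨⟨⟨⟨fun _ => v, fun {a b} h => h.elim⟩, rfl⟩⟩, ?_⟩
    rintro ⟨f, hf⟩
    refine Subtype.ext (DFunLike.ext _ _ ?_)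
    rintro ⟨⟩
    exact hf
  rw [hcount]
  exact Nat.card_unique

/-- Peeling off the root of the broom tree. -/
def homEquivCons (G : SimpleGraph V) (c : ℕ) (cs : List ℕ) (v : V) :
    {f : bT (c :: cs) →g G // f (bR (c :: cs)) = v} ≃
      (Fin c → {g : bT cs →g G // G.Adj v (g (bR cs))}) where
  toFun f i := ⟨⟨fun x => f.1 (Sum.inr (i, x)), fun {x y} h => f.1.map_adj ⟨rfl, h⟩⟩, by
    have := f.1.map_adj (bAdj_root_branch c cs i)
    rwa [f.2] at this⟩
  invFun F := ⟨⟨fun z => match z with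
      | Sum.inl _ => v
      | Sum.inr (i, x) => (F i).1 x, by
      rintro (⟨⟩ | ⟨i, x⟩) (⟨⟩ | ⟨j, y⟩) h
      · exact h.elim
      · obtain h : y = bR cs := h
        subst h
        exact (F j).2
      · obtain h : x = bR cs := h
        subst h
        exact G.adj_symm (F i).2
      · obtain ⟨rfl, h⟩ := h
        exact (F i).1.map_adj h⟩, rfl⟩
  left_inv f := by
    refine Subtype.ext (DFunLike.ext _ _ ?_)
    rintro (⟨⟩ | ⟨i, x⟩)
    · exact f.2.symm
    · rfl
  right_inv F := by
    funext i
    exact Subtype.ext (DFunLike.ext _ _ fun x => rfl)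

/-- Splitting by the image of the root. -/
def homEquivSigma (G : SimpleGraph V) (cs : List ℕ) (v : V) :
    {g : bT cs →g G // G.Adj v (g (bR cs))} ≃
      Σ w : {w : V // G.Adj v w}, {g : bT cs →g G // g (bR cs) = w.1} where
  toFun g := ⟨⟨g.1 (bR cs), g.2⟩, ⟨g.1, rfl⟩⟩
  invFun p := ⟨p.2.1, by rw [p.2.2]; exact p.1.2⟩
  left_inv g := rfl
  right_inv p := by
    obtain ⟨⟨w, hw⟩, ⟨g, hg⟩⟩ := p
    simp only at hg
    subst hg
    rfl

lemma hcount_cons (G : SimpleGraph V) [DecidableRel G.Adj] (c : ℕ) (cs : List ℕ) (v : V) :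
    hcount G (c :: cs) v = (∑ w ∈ G.neighborFinset v, hcount G cs w) ^ c := by
  rw [hcount, Nat.card_congr (homEquivCons G c cs v), Nat.card_fun]
  have hbase : Nat.card {g : bT cs →g G // G.Adj v (g (bR cs))}
      = ∑ w ∈ G.neighborFinset v, hcount G cs w := by
    rw [Nat.card_congr (homEquivSigma G cs v)]
    letI : ∀ w : {w : V // G.Adj v w}, Fintype {g : bT cs →g G // g (bR cs) = w.1} :=
      fun w => Fintype.ofFinite _
    rw [Nat.card_eq_fintype_card, Fintype.card_sigma]
    have : ∀ w : {w : V // G.Adj v w},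
        Fintype.card {g : bT cs →g G // g (bR cs) = w.1} = hcount G cs w.1 := by
      intro w
      rw [hcount, Nat.card_eq_fintype_card]
    rw [Finset.sum_congr rfl fun w _ => this w]
    exact (Finset.sum_subtype (G.neighborFinset v)
      (fun w => G.mem_neighborFinset v w) (hcount G cs)).symm
  rw [hbase, Nat.card_eq_fintype_card, Fintype.card_fin]

end HomCount
section LabelCount

open SimpleGraph

/-- Homomorphism count determined by the label alone. -/
def labelCount : (k : ℕ) → List ℕ → WLLabel k → ℕ
  | 0, _, _ => 1
  | k + 1, cs, M => ((show Multiset (WLLabel k) from M).map (labelCount k cs.tail)).sum ^ cs.headI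

variable {V : Type} [Fintype V]

lemma hcount_eq_labelCount (G : SimpleGraph V) [DecidableRel G.Adj] :
    ∀ (cs : List ℕ) (v : V), hcount G cs v = labelCount cs.length cs (wlLabel G cs.length v)
  | [], v => hcount_nil G v
  | c :: cs, v => by
    rw [hcount_cons, Finset.sum_congr rfl (fun w _ => hcount_eq_labelCount G cs w)]
    show _ = (Multiset.map (labelCount cs.length cs)
      (Multiset.map (wlLabel G cs.length) (G.neighborFinset v).val)).sum ^ c
    rw [Multiset.map_map]
    rfl

lemma hcount_eq_labelCount' (G : SimpleGraph V) [DecidableRel G.Adj] (k : ℕ) (cs : List ℕ)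
    (h : cs.length = k) (v : V) : hcount G cs v = labelCount k cs (wlLabel G k v) := by
  subst h
  exact hcount_eq_labelCount G cs v

lemma labelCount_pos : ∀ (k : ℕ) (cs : List ℕ) (ℓ : WLLabel k), GoodL k ℓ →
    0 < labelCount k cs ℓ
  | 0, _, _, _ => one_pos
  | k + 1, cs, M, h => by
    obtain ⟨hne, hall⟩ := h
    apply pow_pos
    obtain ⟨a, ha⟩ := Multiset.exists_mem_of_ne_zero hne
    calc 0 < labelCount k cs.tail a := labelCount_pos k cs.tail a (hall a ha)
    _ ≤ _ := Multiset.single_le_sum (fun x _ => Nat.zero_le x) _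
        (Multiset.mem_map_of_mem _ ha)

lemma goodL_wlLabel (G : SimpleGraph V) [DecidableRel G.Adj] :
    ∀ (k : ℕ) (v : V), (∃ w, G.Adj v w) → GoodL k (wlLabel G k v)
  | 0, _, _ => trivial
  | k + 1, v, ⟨w, hw⟩ => by
    constructor
    · have hmem : wlLabel G k w ∈ (Multiset.map (wlLabel G k) (G.neighborFinset v).val) :=
        Multiset.mem_map_of_mem _ (by rw [Finset.mem_val, SimpleGraph.mem_neighborFinset]; exact hw)
      intro h0
      rw [show Multiset.map (wlLabel G k) (G.neighborFinset v).val
        = (0 : Multiset (WLLabel k)) from h0] at hmem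
      exact absurd hmem (Multiset.notMem_zero _)
    · intro ℓ hℓ
      obtain ⟨w', hw', rfl⟩ := Multiset.mem_map.1 hℓ
      rw [Finset.mem_val, SimpleGraph.mem_neighborFinset] at hw'
      exact goodL_wlLabel G k w' ⟨v, G.adj_symm hw'⟩

end LabelCount
section Analysis

open Filter

lemma exists_forall_pow_le {α : Type} (s : Finset α) (r : α → ℝ)
    (hr : ∀ a ∈ s, 0 ≤ r a ∧ r a < 1) (ε : ℝ) (hε : 0 < ε) :
    ∃ c : ℕ, ∀ a ∈ s, (r a) ^ c ≤ ε := by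
  classical
  induction s using Finset.induction_on with
  | empty => exact ⟨0, by simp⟩
  | @insert a s ha ih =>
    obtain ⟨c₀, hc₀⟩ := ih (fun b hb => hr b (Finset.mem_insert_of_mem hb))
    have h0 := (hr a (Finset.mem_insert_self a s)).1
    have h1 := (hr a (Finset.mem_insert_self a s)).2
    obtain ⟨c₁, hc₁⟩ :=
      ((tendsto_pow_atTop_nhds_zero_of_lt_one h0 h1).eventually (gt_mem_nhds hε)).exists
    refine ⟨max c₀ c₁, ?_⟩
    intro b hb
    rcases Finset.mem_insert.1 hb with rfl | hb
    · exact le_trans (pow_le_pow_of_le_one h0 h1.le (le_max_right c₀ c₁)) hc₁.le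
    · exact le_trans (pow_le_pow_of_le_one (hr b (Finset.mem_insert_of_mem hb)).1
        (hr b (Finset.mem_insert_of_mem hb)).2.le (le_max_left c₀ c₁)) (hc₀ b hb)

lemma main_analysis : ∀ (k : ℕ) (L : Finset (WLLabel k)), (∀ ℓ ∈ L, GoodL k ℓ) →
    ∃ cf : ℕ → List ℕ, (∀ n, (cf n).length = k) ∧
      ∀ ℓM ∈ L, ∀ ℓN ∈ L, wlLT k ℓM ℓN →
        Filter.Tendsto (fun n => (labelCount k (cf n) ℓM : ℝ) / (labelCount k (cf n) ℓN : ℝ))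
          Filter.atTop (nhds 0) := by
  intro k
  induction k with
  | zero => exact fun L _ => ⟨fun _ => [], fun _ => rfl, fun ℓM _ ℓN _ h => h.elim⟩
  | succ k ih =>
    intro L hL
    classical
    set L' : Finset (WLLabel k) :=
      L.sup (fun M => (show Multiset (WLLabel k) from M).toFinset) with hL'def
    have hmemL' : ∀ M ∈ L, ∀ ℓ ∈ (show Multiset (WLLabel k) from M), ℓ ∈ L' := by
      intro M hM ℓ hℓ
      rw [hL'def, Finset.mem_sup]
      exact ⟨M, hM, Multiset.mem_toFinset.2 hℓ⟩
    have hL'good : ∀ ℓ ∈ L', GoodL k ℓ := by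
      intro ℓ hℓ
      rw [hL'def, Finset.mem_sup] at hℓ
      obtain ⟨M, hM, hℓ⟩ := hℓ
      exact (hL M hM).2 ℓ (Multiset.mem_toFinset.1 hℓ)
    obtain ⟨cf', hlen', htend⟩ := ih L' hL'good
    set A : ℕ → WLLabel (k + 1) → ℕ :=
      fun n M => ((show Multiset (WLLabel k) from M).map (labelCount k (cf' n))).sum with hA
    have hgpos : ∀ (n : ℕ) (b : WLLabel k), b ∈ L' → (0:ℝ) < labelCount k (cf' n) b := by
      intro n b hb
      exact_mod_cast labelCount_pos k (cf' n) b (hL'good b hb)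
    have hApos : ∀ (n : ℕ), ∀ M ∈ L, 0 < A n M := by
      intro n M hM
      obtain ⟨hne, hall⟩ := hL M hM
      obtain ⟨a, ha⟩ := Multiset.exists_mem_of_ne_zero hne
      calc 0 < labelCount k (cf' n) a := labelCount_pos k (cf' n) a (hall a ha)
      _ ≤ _ := Multiset.single_le_sum (fun x _ => Nat.zero_le x) _
          (Multiset.mem_map_of_mem _ ha)
    -- eventual strictness for each relevant pair
    have hstrict : ∀ M ∈ L, ∀ N ∈ L, wlLT (k+1) M N →
        ∀ᶠ n in Filter.atTop, (A n M : ℝ) < (A n N : ℝ) := by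
      intro M hM N hN hlt
      obtain ⟨a, ha, hae⟩ := hlt
      set U : Finset (WLLabel k) := (show Multiset (WLLabel k) from M).toFinset
        ∪ (show Multiset (WLLabel k) from N).toFinset with hU
      have haN : a ∈ (show Multiset (WLLabel k) from N) :=
        Multiset.count_pos.1 (lt_of_le_of_lt (Nat.zero_le _) ha)
      have haU : a ∈ U := Finset.mem_union_right _ (Multiset.mem_toFinset.2 haN)
      have haL' : a ∈ L' := hmemL' N hN a haN
      have hUL' : ∀ b ∈ U, b ∈ L' := by
        intro b hb
        rcases Finset.mem_union.1 hb with hb | hb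
        · exact hmemL' M hM b (Multiset.mem_toFinset.1 hb)
        · exact hmemL' N hN b (Multiset.mem_toFinset.1 hb)
      have hsumN : ∀ (n : ℕ) (P : WLLabel (k+1)),
          (show Multiset (WLLabel k) from P).toFinset ⊆ U →
          A n P = ∑ b ∈ U, Multiset.count b (show Multiset (WLLabel k) from P)
            * labelCount k (cf' n) b := by
        intro n P hsub
        rw [hA]
        show ((show Multiset (WLLabel k) from P).map (labelCount k (cf' n))).sum = _
        rw [Finset.sum_multiset_map_count]
        refine Finset.sum_subset hsub ?_
        intro b _ hb
        rw [Multiset.count_eq_zero_of_notMem (fun hmem => hb (Multiset.mem_toFinset.2 hmem))]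
        simp
      set Uh : Finset (WLLabel k) := U.filter (fun b => ¬ b = a ∧ wlLT k a b) with hUh
      set Ul : Finset (WLLabel k) := U.filter (fun b => ¬ b = a ∧ ¬ wlLT k a b) with hUl
      have hsplit : ∀ (f : WLLabel k → ℝ),
          ∑ b ∈ U, f b = f a + ∑ b ∈ Uh, f b + ∑ b ∈ Ul, f b := by
        intro f
        have h1 : ∑ b ∈ U.filter (fun b => b = a), f b
            + ∑ b ∈ U.filter (fun b => ¬ b = a), f b = ∑ b ∈ U, f b :=
          Finset.sum_filter_add_sum_filter_not U (fun b => b = a) f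
        have h2 : ∑ b ∈ (U.filter (fun b => ¬ b = a)).filter (fun b => wlLT k a b), f b
            + ∑ b ∈ (U.filter (fun b => ¬ b = a)).filter (fun b => ¬ wlLT k a b), f b
            = ∑ b ∈ U.filter (fun b => ¬ b = a), f b :=
          Finset.sum_filter_add_sum_filter_not _ (fun b => wlLT k a b) f
        have h3 : U.filter (fun b => b = a) = {a} := by
          rw [Finset.filter_eq', if_pos haU]
        have h4 : (U.filter (fun b => ¬ b = a)).filter (fun b => wlLT k a b) = Uh := by
          rw [Finset.filter_filter]
        have h5 : (U.filter (fun b => ¬ b = a)).filter (fun b => ¬ wlLT k a b) = Ul := by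
          rw [Finset.filter_filter]
        rw [h3, Finset.sum_singleton] at h1
        rw [h4, h5] at h2
        linarith
      -- the small terms tend to zero relatively to the `a` term
      have hsmall : Filter.Tendsto (fun n => ∑ b ∈ Ul,
          (Multiset.count b (show Multiset (WLLabel k) from M) : ℝ)
            * (labelCount k (cf' n) b / labelCount k (cf' n) a)) Filter.atTop (nhds 0) := by
        have h0 : (0:ℝ) = ∑ b ∈ Ul, 0 := by simp
        rw [h0]
        refine tendsto_finset_sum _ ?_
        intro b hb
        rw [hUl, Finset.mem_filter] at hb
        obtain ⟨hbU, hba, hnlt⟩ := hb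
        have hblt : wlLT k b a := by
          rcases (wlLT_trans_trichotomy k).2 a b with h | h | h
          · exact absurd h hnlt
          · exact absurd h.symm hba
          · exact h
        have := (htend b (hUL' b hbU) a haL' hblt).const_mul
          ((Multiset.count b (show Multiset (WLLabel k) from M) : ℝ))
        simpa using this
      have hev1 := hsmall.eventually (gt_mem_nhds one_pos)
      filter_upwards [hev1] with n hn
      have hsubM : (show Multiset (WLLabel k) from M).toFinset ⊆ U := Finset.subset_union_left
      have hsubN : (show Multiset (WLLabel k) from N).toFinset ⊆ U := Finset.subset_union_right
      rw [hsumN n M hsubM, hsumN n N hsubN]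
      push_cast
      rw [hsplit (fun b => (Multiset.count b (show Multiset (WLLabel k) from M) : ℝ)
            * labelCount k (cf' n) b),
          hsplit (fun b => (Multiset.count b (show Multiset (WLLabel k) from N) : ℝ)
            * labelCount k (cf' n) b)]
      have hheq : ∑ b ∈ Uh, (Multiset.count b (show Multiset (WLLabel k) from M) : ℝ)
            * labelCount k (cf' n) b
          = ∑ b ∈ Uh, (Multiset.count b (show Multiset (WLLabel k) from N) : ℝ)
            * labelCount k (cf' n) b := by
        refine Finset.sum_congr rfl ?_
        intro b hb
        rw [hUh, Finset.mem_filter] at hb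
        rw [hae b hb.2.2]
      have hga : (0:ℝ) < labelCount k (cf' n) a := hgpos n a haL'
      have hlowM : ∑ b ∈ Ul, (Multiset.count b (show Multiset (WLLabel k) from M) : ℝ)
            * labelCount k (cf' n) b < labelCount k (cf' n) a := by
        have heq : ∑ b ∈ Ul, (Multiset.count b (show Multiset (WLLabel k) from M) : ℝ)
              * labelCount k (cf' n) b
            = (∑ b ∈ Ul, (Multiset.count b (show Multiset (WLLabel k) from M) : ℝ)
              * (labelCount k (cf' n) b / labelCount k (cf' n) a)) * labelCount k (cf' n) a := by
          rw [Finset.sum_mul]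
          refine Finset.sum_congr rfl ?_
          intro b _
          rw [mul_assoc, div_mul_cancel₀ _ (ne_of_gt hga)]
        rw [heq]
        calc _ < (1:ℝ) * (labelCount k (cf' n) a : ℝ) :=
              mul_lt_mul_of_pos_right hn hga
        _ = _ := one_mul _
      have hlowN : (0:ℝ) ≤ ∑ b ∈ Ul, (Multiset.count b (show Multiset (WLLabel k) from N) : ℝ)
            * labelCount k (cf' n) b := by
        refine Finset.sum_nonneg ?_
        intro b hb
        have := hgpos n b (hUL' b (Finset.mem_filter.1 hb).1)
        positivity
      have hcount : (Multiset.count a (show Multiset (WLLabel k) from M) : ℝ) + 1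
          ≤ (Multiset.count a (show Multiset (WLLabel k) from N) : ℝ) := by
        exact_mod_cast ha
      nlinarith [hga, mul_le_mul_of_nonneg_right hcount hga.le]
    -- combine over all pairs
    have hall : ∀ᶠ n in Filter.atTop, ∀ M ∈ L, ∀ N ∈ L, wlLT (k+1) M N →
        (A n M : ℝ) < A n N := by
      rw [Filter.eventually_all_finset]
      intro M hM
      rw [Filter.eventually_all_finset]
      intro N hN
      by_cases h : wlLT (k+1) M N
      · exact (hstrict M hM N hN h).mono fun n hn _ => hn
      · exact Filter.Eventually.of_forall fun n hcon => absurd hcon h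
    obtain ⟨N₀, hN₀⟩ := Filter.eventually_atTop.1 hall
    have hex : ∀ n, N₀ ≤ n → ∃ c : ℕ, ∀ M ∈ L, ∀ N ∈ L, wlLT (k+1) M N →
        ((A n M : ℝ) / (A n N : ℝ)) ^ c ≤ 1 / ((n : ℝ) + 1) := by
      intro n hn
      set s : Finset (WLLabel (k+1) × WLLabel (k+1)) :=
        (L ×ˢ L).filter (fun p => wlLT (k+1) p.1 p.2) with hs
      have hr : ∀ p ∈ s, 0 ≤ (A n p.1 : ℝ) / (A n p.2) ∧ (A n p.1 : ℝ) / (A n p.2) < 1 := by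
        rintro ⟨M, N⟩ hp
        rw [hs, Finset.mem_filter, Finset.mem_product] at hp
        obtain ⟨⟨hM, hN⟩, hlt⟩ := hp
        have hMpos : (0:ℝ) < A n M := by exact_mod_cast hApos n M hM
        have hNpos : (0:ℝ) < A n N := by exact_mod_cast hApos n N hN
        constructor
        · positivity
        · rw [div_lt_one hNpos]
          exact hN₀ n hn M hM N hN hlt
      obtain ⟨c, hc⟩ := exists_forall_pow_le s (fun p => (A n p.1 : ℝ) / (A n p.2)) hr
        (1 / ((n : ℝ) + 1)) (by positivity)
      refine ⟨c, fun M hM N hN hlt => ?_⟩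
      exact hc (M, N) (by rw [hs]; exact Finset.mem_filter.2 ⟨Finset.mem_product.2 ⟨hM, hN⟩, hlt⟩)
    set cexp : ℕ → ℕ := fun n => if h : N₀ ≤ n then (hex n h).choose else 0 with hcexp
    refine ⟨fun n => cexp n :: cf' n, fun n => by simp [hlen'], ?_⟩
    intro M hM N hN hlt
    have hlc : ∀ (n : ℕ) (P : WLLabel (k+1)),
        labelCount (k+1) (cexp n :: cf' n) P = (A n P) ^ (cexp n) := fun n P => rfl
    have hbound : ∀ᶠ n in Filter.atTop,
        (labelCount (k+1) (cexp n :: cf' n) M : ℝ) / (labelCount (k+1) (cexp n :: cf' n) N : ℝ)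
          ≤ 1 / ((n : ℝ) + 1) := by
      filter_upwards [Filter.eventually_ge_atTop N₀] with n hn
      rw [hlc, hlc]
      push_cast
      rw [← div_pow]
      have : cexp n = (hex n hn).choose := by rw [hcexp]; exact dif_pos hn
      rw [this]
      exact (hex n hn).choose_spec M hM N hN hlt
    have hnonneg : ∀ n, (0:ℝ) ≤
        (labelCount (k+1) (cexp n :: cf' n) M : ℝ) / (labelCount (k+1) (cexp n :: cf' n) N : ℝ) := by
      intro n
      positivity
    exact tendsto_of_tendsto_of_tendsto_of_le_of_le' tendsto_const_nhds
      tendsto_one_div_add_atTop_nhds_zero_nat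
      (Filter.Eventually.of_forall hnonneg) hbound

end Analysis

section Assembly

open SimpleGraph

/-- Transport a graph along an equivalence of vertex types. -/
def pullGraph {α β : Type} (e : α ≃ β) (G : SimpleGraph α) : SimpleGraph β where
  Adj a b := G.Adj (e.symm a) (e.symm b)
  symm := ⟨fun a b h => G.adj_symm h⟩
  loopless := ⟨fun a h => G.irrefl h⟩

def pullIso {α β : Type} (e : α ≃ β) (G : SimpleGraph α) : G ≃g pullGraph e G :=
  ⟨e, by
    intro a b
    show G.Adj (e.symm (e a)) (e.symm (e b)) ↔ G.Adj a b
    rw [e.symm_apply_apply, e.symm_apply_apply]⟩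

lemma pullGraph_isTree {α β : Type} (e : α ≃ β) (G : SimpleGraph α) (h : G.IsTree) :
    (pullGraph e G).IsTree := by
  constructor
  · exact ((pullIso e G).connected_iff).1 h.isConnected
  · intro u p hp
    exact h.IsAcyclic (p.map (pullIso e G).symm.toHom)
      (hp.map (pullIso e G).symm.toEquiv.injective)

/-- Transporting rooted homomorphism counts along an equivalence. -/
def pullHomEquiv {α β V : Type} (e : α ≃ β) (Gt : SimpleGraph α) (G : SimpleGraph V)
    (r : α) (v : V) :
    {f : pullGraph e Gt →g G // f (e r) = v} ≃ {f : Gt →g G // f r = v} where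
  toFun f := ⟨f.1.comp (pullIso e Gt).toHom, f.2⟩
  invFun g := ⟨g.1.comp (pullIso e Gt).symm.toHom, by
    show g.1 (e.symm (e r)) = v
    rw [e.symm_apply_apply]
    exact g.2⟩
  left_inv f := Subtype.ext (DFunLike.ext _ _ fun x => by
    show f.1 (e (e.symm x)) = f.1 x
    rw [e.apply_symm_apply])
  right_inv g := Subtype.ext (DFunLike.ext _ _ fun x => by
    show g.1 (e.symm (e x)) = g.1 x
    rw [e.symm_apply_apply])

end Assembly


/-- Domination lemma: for a finite family of graphs with chosen non-isolated vertices, there is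
a sequence of rooted trees of depth at most `k` whose rooted homomorphism counts are positive
and respect (asymptotically, with domination) the recursive order on `k`-level WL labels. -/
theorem exists_tree_seq_rooted_hom_count_dominates
    (k : ℕ) {ι : Type} [Fintype ι] {V : ι → Type} [∀ i, Fintype (V i)]
    (G : (i : ι) → SimpleGraph (V i)) [∀ i, DecidableRel (G i).Adj]
    (v : (i : ι) → V i) (hv : ∀ i, ∃ w, (G i).Adj (v i) w) :
    ∃ (m : ℕ → ℕ) (T : (n : ℕ) → SimpleGraph (Fin (m n))) (r : (n : ℕ) → Fin (m n)),
      (∀ n, (T n).IsTree) ∧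
      (∀ n w, (T n).dist (r n) w ≤ k) ∧
      (∀ i n, 0 < Nat.card {f : T n →g G i // f (r n) = v i}) ∧
      (∀ i j : ι, wlLT k (wlLabel (G i) k (v i)) (wlLabel (G j) k (v j)) →
        Filter.Tendsto
          (fun n => (Nat.card {f : T n →g G i // f (r n) = v i} : ℝ) /
            (Nat.card {f : T n →g G j // f (r n) = v j} : ℝ))
          Filter.atTop (nhds 0)) := by
  classical
  set L : Finset (WLLabel k) := Finset.image (fun i => wlLabel (G i) k (v i)) Finset.univ with hLdef
  have hLgood : ∀ ℓ ∈ L, GoodL k ℓ := by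
    intro ℓ hℓ
    rw [hLdef, Finset.mem_image] at hℓ
    obtain ⟨i, -, rfl⟩ := hℓ
    exact goodL_wlLabel (G i) k (v i) (hv i)
  obtain ⟨cf, hlen, htend⟩ := main_analysis k L hLgood
  set m : ℕ → ℕ := fun n => Fintype.card (bV (cf n)) with hm
  set e : (n : ℕ) → bV (cf n) ≃ Fin (m n) := fun n => Fintype.equivFin (bV (cf n)) with he
  set T : (n : ℕ) → SimpleGraph (Fin (m n)) := fun n => pullGraph (e n) (bT (cf n)) with hT
  set r : (n : ℕ) → Fin (m n) := fun n => (e n) (bR (cf n)) with hr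
  have hcard : ∀ (n : ℕ) (i : ι),
      Nat.card {f : T n →g G i // f (r n) = v i} = hcount (G i) (cf n) (v i) := by
    intro n i
    exact Nat.card_congr (pullHomEquiv (e n) (bT (cf n)) (G i) (bR (cf n)) (v i))
  have hcard' : ∀ (n : ℕ) (i : ι),
      Nat.card {f : T n →g G i // f (r n) = v i} = labelCount k (cf n) (wlLabel (G i) k (v i)) := by
    intro n i
    rw [hcard n i, hcount_eq_labelCount' (G i) k (cf n) (hlen n) (v i)]
  refine ⟨m, T, r, ?_, ?_, ?_, ?_⟩
  · intro n
    exact pullGraph_isTree (e n) (bT (cf n)) (bT_isTree (cf n))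
  · intro n w
    have h1 : (T n).dist (r n) w ≤ (((walkFromRoot (cf n) ((e n).symm w)).map
        (pullIso (e n) (bT (cf n))).toHom).copy rfl ((e n).apply_symm_apply w)).length :=
      SimpleGraph.dist_le _
    refine h1.trans (le_of_eq_of_le (SimpleGraph.Walk.length_copy _ _ _) ?_)
    rw [SimpleGraph.Walk.length_map]
    exact le_of_le_of_eq (walkFromRoot_length (cf n) ((e n).symm w)) (hlen n)
  · intro i n
    rw [hcard' n i]
    exact labelCount_pos k (cf n) _ (goodL_wlLabel (G i) k (v i) (hv i))
  · intro i j hlt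
    have hmi : wlLabel (G i) k (v i) ∈ L := by
      rw [hLdef, Finset.mem_image]; exact ⟨i, Finset.mem_univ i, rfl⟩
    have hmj : wlLabel (G j) k (v j) ∈ L := by
      rw [hLdef, Finset.mem_image]; exact ⟨j, Finset.mem_univ j, rfl⟩
    have := htend _ hmi _ hmj hlt
    refine this.congr ?_
    intro n
    rw [hcard' n i, hcard' n j]
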